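/- Let P be a nonzero real 3×3 skew-symmetric matrix and a, b ∈ ℝ³ vectors with P b = 0 and b ≠ 0. Then ⟨b, P a + g(a) b⟩ = 0 if and only if P a + g(a) b = 0. (If dS ≠ 0 at a regular point x, then dS/dt = 0 along the metriplectic system exactly when x is an equilibrium of the system.) -/

import Mathlib

open Matrix RealInnerProductSpace

/-- The dissipative tensor `g(a) = a ⊗ a − ‖a‖² I` of the paper, as a 3×3 matrix;
it acts by `g(a) v = ⟨a, v⟩ a − ‖a‖² v`. -/
noncomputable def gmat (a : EuclideanSpace ℝ (Fin 3)) : Matrix (Fin 3) (Fin 3) ℝ :=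
  Matrix.vecMulVec a a - (‖a‖ ^ 2) • 1

lemma inner_eq_dot (x y : EuclideanSpace ℝ (Fin 3)) : ⟪x, y⟫ = x ⬝ᵥ y := by
  simp [PiLp.inner_apply, dotProduct, RCLike.inner_apply, mul_comm]

lemma gmat_mulVec (a v : EuclideanSpace ℝ (Fin 3)) :
    gmat a *ᵥ v = (⟪a, v⟫ • a - (‖a‖ ^ 2) • v : EuclideanSpace ℝ (Fin 3)) := by
  rw [gmat, Matrix.sub_mulVec, Matrix.smul_mulVec, Matrix.one_mulVec]
  funext i
  simp only [Pi.sub_apply, Pi.smul_apply, PiLp.sub_apply, PiLp.smul_apply, smul_eq_mul, WithLp.ofLp_sub, WithLp.ofLp_smul,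
    inner_eq_dot, Matrix.mulVec, dotProduct, Matrix.vecMulVec_apply]
  rw [Finset.sum_mul]
  congr 1
  apply Finset.sum_congr rfl; intro j _; ring

/-- If `dS ≠ 0` at a regular point, then `dS/dt = 0` along the metriplectic system
exactly at equilibria of the system. -/
theorem dS_dt_zero_iff_equilibrium (P : Matrix (Fin 3) (Fin 3) ℝ) (hP : Pᵀ = -P)
    (hP0 : P ≠ 0) (a b : EuclideanSpace ℝ (Fin 3)) (hb : P *ᵥ b = 0) (hb0 : b ≠ 0) :
    ⟪b, (WithLp.toLp 2 (P *ᵥ a + gmat a *ᵥ b) : EuclideanSpace ℝ (Fin 3))⟫ = 0 ↔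
      P *ᵥ a + gmat a *ᵥ b = 0 := by
  have hbPa : ⟪b, (WithLp.toLp 2 (P *ᵥ a) : EuclideanSpace ℝ (Fin 3))⟫ = 0 := by
    rw [inner_eq_dot, Matrix.dotProduct_mulVec, ← Matrix.mulVec_transpose, hP]
    simp [Matrix.neg_mulVec, hb]
  constructor
  · intro h
    rw [WithLp.toLp_add, inner_add_right, hbPa, zero_add, gmat_mulVec, WithLp.toLp_ofLp, inner_sub_right,
      real_inner_smul_right, real_inner_smul_right,
      real_inner_self_eq_norm_sq] at h
    have hc : ⟪b, a⟫ = ⟪a, b⟫ := real_inner_comm a b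
    have habs : ‖⟪b, a⟫‖ = ‖b‖ * ‖a‖ := by
      rw [Real.norm_eq_abs]
      refine (sq_eq_sq₀ (abs_nonneg _) (mul_nonneg (norm_nonneg b) (norm_nonneg a))).mp ?_
      rw [sq_abs]
      linear_combination h + ⟪b, a⟫ * hc
    have := ((norm_inner_eq_norm_tfae (𝕜 := ℝ) b a).out 0 2).mp habs
    rcases this with hb0' | ⟨r, hr⟩
    · exact absurd hb0' hb0
    · have hPa : P *ᵥ a = 0 := by
        rw [hr]
        have : P *ᵥ (r • b) = r • (P *ᵥ b) := (Matrix.mulVec_smul _ _ _)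
        rw [WithLp.ofLp_smul, this, hb, smul_zero]
      have hga : gmat a *ᵥ b = 0 := by
        rw [gmat_mulVec, hr]
        have h1 : ⟪(r • b : EuclideanSpace ℝ (Fin 3)), b⟫ = r * ‖b‖ ^ 2 := by
          rw [real_inner_smul_left, real_inner_self_eq_norm_sq]
        have h2 : ‖(r • b : EuclideanSpace ℝ (Fin 3))‖ ^ 2 = r ^ 2 * ‖b‖ ^ 2 := by
          rw [norm_smul, mul_pow, Real.norm_eq_abs, sq_abs]
        rw [h1, h2, smul_smul]
        rw [WithLp.ofLp_eq_zero, sub_eq_zero]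
        congr 1
        ring
      rw [hPa, hga, add_zero]
  · intro h
    rw [h, WithLp.toLp_zero, inner_zero_right]
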